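/- The set of non-identity n-qubit Pauli operators {P_s : s : Fin n → Fin 4, s ≠ (fun _ => 0)}, which has 4^n − 1 elements, can be partitioned into 2^n + 1 subsets, each of size 2^n − 1, such that any two Pauli operators lying in the same subset commute: there exists a partition of the index set {s : Fin n → Fin 4 | s ≠ const 0} into 2^n + 1 blocks of cardinality 2^n − 1 with P_s · P_t = P_t · P_s whenever s and t belong to the same block. -/

import Mathlib

open Matrix

/-- The single-qubit Pauli matrices `I, X, Y, Z`. -/
noncomputable def pauli : Fin 4 → Matrix (Fin 2) (Fin 2) ℂ :=
  ![1, !![0, 1; 1, 0], !![0, -Complex.I; Complex.I, 0], !![1, 0; 0, -1]]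

/-- The `n`-qubit Pauli operator `P_s = ⊗ᵢ σ_{s i}`. -/
noncomputable def PauliOp (n : ℕ) (s : Fin n → Fin 4) :
    Matrix (Fin n → Fin 2) (Fin n → Fin 2) ℂ :=
  Matrix.of fun a b => ∏ i, pauli (s i) (a i) (b i)

/-! ### Auxiliary material: sign of commutation of Pauli matrices -/

def epsN : Fin 4 → Fin 4 → ℕ := fun p q => if p ≠ 0 ∧ q ≠ 0 ∧ p ≠ q then 1 else 0

lemma pauli_mul_comm (p q : Fin 4) :
    pauli p * pauli q = ((-1 : ℂ) ^ epsN p q) • (pauli q * pauli p) := by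
  fin_cases p <;> fin_cases q <;>
    simp [pauli, epsN, Matrix.one_fin_two, Matrix.mul_fin_two, Complex.I_mul_I]

lemma pauliOp_mul (n : ℕ) (s t : Fin n → Fin 4) :
    PauliOp n s * PauliOp n t =
      Matrix.of fun a b => ∏ i, (pauli (s i) * pauli (t i)) (a i) (b i) := by
  ext a b
  simp only [PauliOp, Matrix.of_apply, Matrix.mul_apply]
  rw [Fintype.prod_sum]
  exact Finset.sum_congr rfl fun c _ => (Finset.prod_mul_distrib).symm

lemma pauliOp_comm (n : ℕ) (s t : Fin n → Fin 4)
    (h : Even (∑ i, epsN (s i) (t i))) :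
    PauliOp n s * PauliOp n t = PauliOp n t * PauliOp n s := by
  rw [pauliOp_mul, pauliOp_mul]
  ext a b
  simp only [Matrix.of_apply]
  calc ∏ i, (pauli (s i) * pauli (t i)) (a i) (b i)
      = ∏ i, ((-1 : ℂ) ^ epsN (s i) (t i) * (pauli (t i) * pauli (s i)) (a i) (b i)) := by
        refine Finset.prod_congr rfl fun i _ => ?_
        rw [pauli_mul_comm (s i) (t i)]
        simp
    _ = ((-1 : ℂ) ^ (∑ i, epsN (s i) (t i))) *
          ∏ i, (pauli (t i) * pauli (s i)) (a i) (b i) := by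
        rw [Finset.prod_mul_distrib, Finset.prod_pow_eq_pow_sum]
    _ = ∏ i, (pauli (t i) * pauli (s i)) (a i) (b i) := by
        rw [h.neg_one_pow, one_mul]

/-! ### The symplectic encoding over `𝔽₂` -/

def av : Fin 4 → ZMod 2 := ![0, 1, 1, 0]
def bv : Fin 4 → ZMod 2 := ![0, 0, 1, 1]

lemma epsZ (p q : Fin 4) :
    ((epsN p q : ℕ) : ZMod 2) = av p * bv q + av q * bv p := by
  revert p q; decide

def e1 : Fin 4 ≃ ZMod 2 × ZMod 2 where
  toFun p := (av p, bv p)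
  invFun x := if x = (0, 0) then 0 else if x = (1, 0) then 1 else if x = (1, 1) then 2 else 3
  left_inv := by decide
  right_inv := by decide

noncomputable section PauliAux

variable (n : ℕ) (hn : n ≠ 0)

local notation "F" => GaloisField 2 n

def betaB : Module.Basis (Fin n) (ZMod 2) (GaloisField 2 n) :=
  Module.finBasisOfFinrankEq (ZMod 2) (GaloisField 2 n) (GaloisField.finrank 2 hn)

def lam : GaloisField 2 n →ₗ[ZMod 2] ZMod 2 :=
  (betaB n hn).coord ⟨0, Nat.pos_of_ne_zero hn⟩

def Bform : LinearMap.BilinForm (ZMod 2) (GaloisField 2 n) :=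
  (LinearMap.mul (ZMod 2) (GaloisField 2 n)).compr₂ (lam n hn)

lemma Bform_apply (x y : F) : Bform n hn x y = lam n hn (x * y) := rfl

lemma Bform_nondeg : (Bform n hn).Nondegenerate := by
  refine (LinearMap.IsRefl.nondegenerate_iff_separatingLeft fun x y h => ?_).mpr ?_
  · rwa [Bform_apply, mul_comm, ← Bform_apply]
  intro x hx
  by_contra h0
  have h1 : lam n hn (betaB n hn ⟨0, Nat.pos_of_ne_zero hn⟩) = 1 := by
    simp [lam, Module.Basis.coord_apply]
  have h2 := hx (x⁻¹ * betaB n hn ⟨0, Nat.pos_of_ne_zero hn⟩)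
  rw [Bform_apply, mul_inv_cancel_left₀ h0, h1] at h2
  exact one_ne_zero h2

def deltaB : Module.Basis (Fin n) (ZMod 2) (GaloisField 2 n) :=
  (Bform n hn).dualBasis (Bform_nondeg n hn) (betaB n hn)

lemma pair_basis (i j : Fin n) :
    lam n hn (betaB n hn i * deltaB n hn j) = if i = j then 1 else 0 := by
  rw [mul_comm, ← Bform_apply]
  exact (Bform n hn).apply_dualBasis_left (Bform_nondeg n hn) (betaB n hn) j i

lemma key (u w : Fin n → ZMod 2) :
    lam n hn ((betaB n hn).equivFun.symm u * (deltaB n hn).equivFun.symm w) =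
      ∑ i, u i * w i := by
  rw [Module.Basis.equivFun_symm_apply, Module.Basis.equivFun_symm_apply, Finset.sum_mul_sum, map_sum]
  have : ∀ i j : Fin n,
      lam n hn ((u i • betaB n hn i) * (w j • deltaB n hn j)) =
        (u i * w j) * (if i = j then 1 else 0) := by
    intro i j
    rw [smul_mul_smul_comm, _root_.map_smul, smul_eq_mul, pair_basis]
  simp only [map_sum, this]
  simp

def Aval (s : Fin n → Fin 4) : F := (betaB n hn).equivFun.symm fun i => av (s i)
def Bval (s : Fin n → Fin 4) : F := (deltaB n hn).equivFun.symm fun i => bv (s i)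

def e0 : (Fin n → Fin 4) ≃ F × F :=
  (Equiv.piCongrRight fun _ => e1).trans <|
    (Equiv.arrowProdEquivProdArrow _ _ _).trans <|
      Equiv.prodCongr (betaB n hn).equivFun.symm.toEquiv (deltaB n hn).equivFun.symm.toEquiv

lemma e0_apply (s : Fin n → Fin 4) : e0 n hn s = (Aval n hn s, Bval n hn s) := rfl

lemma e0_zero : e0 n hn (fun _ => 0) = 0 := by
  rw [e0_apply]
  have h1 : Aval n hn (fun _ => 0) = 0 := by
    have : (fun i : Fin n => av 0) = 0 := by funext i; rfl
    simp [Aval, this]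
  have h2 : Bval n hn (fun _ => 0) = 0 := by
    have : (fun i : Fin n => bv 0) = 0 := by funext i; rfl
    simp [Bval, this]
  rw [h1, h2]; rfl

def EE : {s : Fin n → Fin 4 // s ≠ fun _ => 0} ≃ {v : F × F // v ≠ 0} :=
  (e0 n hn).subtypeEquiv fun s => by
    constructor
    · intro h h0
      exact h ((e0 n hn).injective (h0.trans (e0_zero n hn).symm))
    · intro h h0
      exact h (h0 ▸ e0_zero n hn)

lemma EE_apply (s : {s : Fin n → Fin 4 // s ≠ fun _ => 0}) :
    ((EE n hn s : {v : F × F // v ≠ 0}) : F × F) = (Aval n hn s.1, Bval n hn s.1) := rfl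

open scoped Classical in
def slopeF : {v : F × F // v ≠ 0} → Option F :=
  fun v => if v.1.1 = 0 then none else some (v.1.2 * (v.1.1)⁻¹)

lemma slopeF_none {v : {v : F × F // v ≠ 0}} (h : slopeF n v = none) : v.1.1 = 0 := by
  by_contra hx
  simp [slopeF, hx] at h

lemma slopeF_some {v : {v : F × F // v ≠ 0}} {m : F} (h : slopeF n v = some m) :
    v.1.2 = m * v.1.1 := by
  have hx : v.1.1 ≠ 0 := by
    intro hx
    simp [slopeF, hx] at h
  have hm : v.1.2 * (v.1.1)⁻¹ = m := by simpa [slopeF, if_neg hx] using h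
  field_simp at hm
  exact hm.trans (mul_comm _ _)

include hn in
lemma card_fiber (o : Option F) :
    Nat.card {v : {v : F × F // v ≠ 0} // slopeF n v = o} = 2 ^ n - 1 := by
  classical
  have hcard : Nat.card F = 2 ^ n := GaloisField.card 2 n hn
  haveI : Fintype F := Fintype.ofFinite _
  have hne : Nat.card {y : F // y ≠ 0} = 2 ^ n - 1 := by
    have h3 : Fintype.card {y : F // y ≠ 0} = Fintype.card F - 1 := by
      simpa [Fintype.card_subtype_eq] using Fintype.card_subtype_compl (fun y : F => y = 0)
    rw [Nat.card_eq_fintype_card, h3, ← Nat.card_eq_fintype_card, hcard]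
  rw [← hne]
  cases o with
  | none =>
    refine Nat.card_congr (Equiv.mk (fun v => ⟨v.1.1.2, ?_⟩)
      (fun y => ⟨⟨(0, y.1), fun h0 => y.2 (congrArg Prod.snd h0)⟩, by simp [slopeF]⟩) ?_ ?_)
    · have hx : v.1.1.1 = 0 := slopeF_none n v.2
      intro hy
      exact v.1.2 (Prod.ext hx hy)
    · rintro ⟨⟨⟨x, y⟩, hv⟩, hs⟩
      have hx : x = 0 := slopeF_none n hs
      apply Subtype.ext
      apply Subtype.ext
      simp [hx]
    · intro y; rfl
  | some m =>
    refine Nat.card_congr (Equiv.mk (fun v => ⟨v.1.1.1, ?_⟩)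
      (fun x => ⟨⟨(x.1, m * x.1), fun h0 => x.2 (congrArg Prod.fst h0)⟩,
        by simp [slopeF, x.2, mul_inv_cancel_right₀]⟩) ?_ ?_)
    · have hv := v.2
      intro hx
      simp [slopeF, hx] at hv
    · rintro ⟨⟨⟨x, y⟩, hv⟩, hs⟩
      have hy : y = m * x := slopeF_some n hs
      apply Subtype.ext
      apply Subtype.ext
      simp [hy]
    · intro x; rfl

include hn in
lemma same_slope_even (s t : {s : Fin n → Fin 4 // s ≠ fun _ => 0})
    (h : slopeF n (EE n hn s) = slopeF n (EE n hn t)) :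
    Even (∑ i, epsN (s.1 i) (t.1 i)) := by
  classical
  have hzero : ((∑ i, epsN (s.1 i) (t.1 i) : ℕ) : ZMod 2) = 0 := by
    have hsum : ((∑ i, epsN (s.1 i) (t.1 i) : ℕ) : ZMod 2)
        = lam n hn (Aval n hn s.1 * Bval n hn t.1 + Aval n hn t.1 * Bval n hn s.1) := by
      rw [Nat.cast_sum, map_add]
      rw [show Aval n hn s.1 * Bval n hn t.1
            = (betaB n hn).equivFun.symm (fun i => av (s.1 i)) *
              (deltaB n hn).equivFun.symm (fun i => bv (t.1 i)) from rfl,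
          show Aval n hn t.1 * Bval n hn s.1
            = (betaB n hn).equivFun.symm (fun i => av (t.1 i)) *
              (deltaB n hn).equivFun.symm (fun i => bv (s.1 i)) from rfl,
          key, key, ← Finset.sum_add_distrib]
      exact Finset.sum_congr rfl fun i _ => epsZ _ _
    rw [hsum]
    cases hval : slopeF n (EE n hn s) with
    | none =>
      have h1 : Aval n hn s.1 = 0 := by
        have := slopeF_none n hval
        rwa [EE_apply] at this
      have h2 : Aval n hn t.1 = 0 := by
        have := slopeF_none n (h ▸ hval)
        rwa [EE_apply] at this
      rw [h1, h2, zero_mul, zero_mul, add_zero, map_zero]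
    | some m =>
      have h1 : Bval n hn s.1 = m * Aval n hn s.1 := by
        have := slopeF_some n hval
        rwa [EE_apply] at this
      have h2 : Bval n hn t.1 = m * Aval n hn t.1 := by
        have := slopeF_some n (h ▸ hval)
        rwa [EE_apply] at this
      rw [h1, h2]
      rw [show Aval n hn s.1 * (m * Aval n hn t.1) + Aval n hn t.1 * (m * Aval n hn s.1)
            = m * Aval n hn s.1 * Aval n hn t.1 + m * Aval n hn s.1 * Aval n hn t.1 from by
          ring]
      rw [CharTwo.add_self_eq_zero, map_zero]
  exact even_iff_two_dvd.mpr ((ZMod.natCast_eq_zero_iff _ _).mp hzero)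

end PauliAux

/-- Partition of the `4^n − 1` non-identity `n`-qubit Pauli operators into `2^n + 1`
blocks of size `2^n − 1` such that any two Pauli operators in the same block commute. -/
theorem exists_commuting_partition_of_paulis (n : ℕ) :
    ∃ f : {s : Fin n → Fin 4 // s ≠ fun _ => 0} → Fin (2 ^ n + 1),
      (∀ i : Fin (2 ^ n + 1),
        (Finset.univ.filter fun s => f s = i).card = 2 ^ n - 1) ∧
      (∀ s t, f s = f t →
        PauliOp n s.1 * PauliOp n t.1 = PauliOp n t.1 * PauliOp n s.1) := by
  classical
  rcases eq_or_ne n 0 with rfl | hn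
  · haveI : IsEmpty {s : Fin 0 → Fin 4 // s ≠ fun _ => 0} :=
      ⟨fun s => s.2 (funext fun i => i.elim0)⟩
    refine ⟨fun s => 0, fun i => ?_, fun s t _ => isEmptyElim s⟩
    simp [Finset.univ_eq_empty]
  · haveI : Fintype (GaloisField 2 n) := Fintype.ofFinite _
    have hcardO : Fintype.card (Option (GaloisField 2 n)) = 2 ^ n + 1 := by
      rw [Fintype.card_option, ← Nat.card_eq_fintype_card, GaloisField.card 2 n hn]
    let eI : Option (GaloisField 2 n) ≃ Fin (2 ^ n + 1) := Fintype.equivFinOfCardEq hcardO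
    refine ⟨fun s => eI (slopeF n (EE n hn s)), fun i => ?_, fun s t h => ?_⟩
    · have h1 : (Finset.univ.filter fun s => eI (slopeF n (EE n hn s)) = i).card
          = Nat.card {s : {s : Fin n → Fin 4 // s ≠ fun _ => 0} //
              eI (slopeF n (EE n hn s)) = i} := by
        rw [Nat.card_eq_fintype_card, Fintype.card_subtype]
      rw [h1]
      have h2 : Nat.card {s : {s : Fin n → Fin 4 // s ≠ fun _ => 0} //
            eI (slopeF n (EE n hn s)) = i}
          = Nat.card {v : {v : GaloisField 2 n × GaloisField 2 n // v ≠ 0} //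
              slopeF n v = eI.symm i} := by
        refine Nat.card_congr (((EE n hn).subtypeEquiv
            (p := fun s => eI (slopeF n (EE n hn s)) = i)
            (q := fun v => eI (slopeF n v) = i) fun s => Iff.rfl).trans
          (Equiv.subtypeEquivRight fun v => ?_))
        rw [Equiv.apply_eq_iff_eq_symm_apply]
      rw [h2, card_fiber n hn]
    · exact pauliOp_comm n s.1 t.1 (same_slope_even n hn s t (eI.injective h))
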